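/- In any {K_3,K_4}-decomposition of K_19 with exactly 11 triangles, exactly 11 vertices are each contained in exactly 3 triangles, the remaining 8 vertices are in no triangle, and the union of the 11 triangles is a 6-regular graph on those 11 vertices. -/

import Mathlib

/-- A `{K₃,K₄}`-decomposition of `K_v`: a family of blocks of size 3 or 4 such that
every edge (2-element subset of vertices) is contained in exactly one block. -/
def IsK34Decomposition {v : ℕ} (D : Finset (Finset (Fin v))) : Prop :=
  (∀ B ∈ D, B.card = 3 ∨ B.card = 4) ∧
  ∀ e : Finset (Fin v), e.card = 2 → ∃! B, B ∈ D ∧ e ⊆ B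


open Finset

lemma block_unique {D : Finset (Finset (Fin 19))} (hD : IsK34Decomposition D)
    {B1 B2 : Finset (Fin 19)}
    (h1 : B1 ∈ D) (h2 : B2 ∈ D) {x y : Fin 19} (hxy : x ≠ y)
    (hx1 : x ∈ B1) (hy1 : y ∈ B1) (hx2 : x ∈ B2) (hy2 : y ∈ B2) : B1 = B2 := by
  have he : ({x, y} : Finset (Fin 19)).card = 2 := by
    rw [card_insert_of_notMem (by simpa using hxy), card_singleton]
  obtain ⟨B, -, hu⟩ := hD.2 _ he
  have e1 : B1 = B := hu B1 ⟨h1, by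
    intro z hz; simp only [mem_insert, mem_singleton] at hz
    rcases hz with rfl|rfl <;> assumption⟩
  have e2 : B2 = B := hu B2 ⟨h2, by
    intro z hz; simp only [mem_insert, mem_singleton] at hz
    rcases hz with rfl|rfl <;> assumption⟩
  rw [e1, e2]

lemma deg_eq {D : Finset (Finset (Fin 19))} (hD : IsK34Decomposition D) (x : Fin 19) :
    2 * (D.filter fun B => B.card = 3 ∧ x ∈ B).card
      + 3 * (D.filter fun B => B.card = 4 ∧ x ∈ B).card = 18 := by
  classical
  set f : Fin 19 → Finset (Fin 19) := fun y =>
    if h : ({x, y} : Finset (Fin 19)).card = 2 then (hD.2 _ h).exists.choose else ∅ with hf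
  have hfy : ∀ y : Fin 19, y ≠ x → f y ∈ D ∧ x ∈ f y ∧ y ∈ f y := by
    intro y hyx
    have he : ({x, y} : Finset (Fin 19)).card = 2 := by
      rw [card_insert_of_notMem (by simpa using hyx.symm), card_singleton]
    have hs := (hD.2 _ he).exists.choose_spec
    simp only [hf, dif_pos he]
    exact ⟨hs.1, hs.2 (by simp), hs.2 (by simp)⟩
  have key : (univ.erase x).card = ∑ B ∈ D.filter (fun B => x ∈ B), (B.card - 1) := by
    rw [Finset.card_eq_sum_card_fiberwise (f := f)
      (t := D.filter (fun B => x ∈ B)) ?_]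
    · apply Finset.sum_congr rfl
      intro B hB
      simp only [mem_filter] at hB
      have hfib : (univ.erase x).filter (fun y => f y = B) = B.erase x := by
        ext y
        simp only [mem_filter, mem_erase, mem_univ, and_true, true_and]
        constructor
        · rintro ⟨hyx, rfl⟩
          exact ⟨hyx, (hfy y hyx).2.2⟩
        · rintro ⟨hyx, hyB⟩
          obtain ⟨hfD, hxf, hyff⟩ := hfy y hyx
          exact ⟨hyx, block_unique hD hfD hB.1 (Ne.symm hyx) hxf hyff hB.2 hyB⟩
      rw [hfib, card_erase_of_mem hB.2]
    · intro y hy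
      simp only [coe_erase, Set.mem_diff, coe_univ, Set.mem_univ, Set.mem_singleton_iff, true_and] at hy
      obtain ⟨hfD, hxf, -⟩ := hfy y hy
      exact mem_filter.mpr ⟨hfD, hxf⟩
  have hcard18 : (univ.erase x).card = 18 := by
    rw [card_erase_of_mem (mem_univ x)]
    simp
  have hsplit : ∑ B ∈ D.filter (fun B => x ∈ B), (B.card - 1)
      = 2 * (D.filter fun B => B.card = 3 ∧ x ∈ B).card
        + 3 * (D.filter fun B => B.card = 4 ∧ x ∈ B).card := by
    rw [← Finset.sum_filter_add_sum_filter_not (D.filter fun B => x ∈ B)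
      (fun B => B.card = 3)]
    congr 1
    · have heq : (D.filter fun B => x ∈ B).filter (fun B => B.card = 3)
          = D.filter (fun B => B.card = 3 ∧ x ∈ B) := by
        rw [filter_filter]
        exact filter_congr (by intro B _; simp [and_comm])
      rw [heq, Finset.sum_const_nat (m := 2)
        (fun B hB => by simp only [mem_filter] at hB; omega), mul_comm]
    · have heq : (D.filter fun B => x ∈ B).filter (fun B => ¬ B.card = 3)
          = D.filter (fun B => B.card = 4 ∧ x ∈ B) := by
        rw [filter_filter]
        refine filter_congr ?_
        intro B hBD
        rcases hD.1 B hBD with h3 | h4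
        · simp [h3]
        · simp [h4, and_comm]
      rw [heq, Finset.sum_const_nat (m := 3)
        (fun B hB => by simp only [mem_filter] at hB; omega), mul_comm]
  omega

lemma alpha_cases {D : Finset (Finset (Fin 19))} (hD : IsK34Decomposition D) (x : Fin 19) :
    (D.filter fun B => B.card = 3 ∧ x ∈ B).card = 0 ∨
    (D.filter fun B => B.card = 3 ∧ x ∈ B).card = 3 ∨
    (D.filter fun B => B.card = 3 ∧ x ∈ B).card = 6 ∨
    (D.filter fun B => B.card = 3 ∧ x ∈ B).card = 9 := by
  have := deg_eq hD x
  omega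

lemma sum_alpha {D : Finset (Finset (Fin 19))}
    (hα : (D.filter fun B => B.card = 3).card = 11) :
    ∑ x : Fin 19, (D.filter fun B => B.card = 3 ∧ x ∈ B).card = 33 := by
  classical
  have h1 : ∀ x : Fin 19, (D.filter fun B => B.card = 3 ∧ x ∈ B)
      = (D.filter fun B => B.card = 3).filter (fun B => x ∈ B) := by
    intro x; rw [filter_filter]
  simp_rw [h1, Finset.card_filter]
  rw [Finset.sum_comm]
  have h2 : ∀ B ∈ D.filter (fun B => B.card = 3),
      (∑ x : Fin 19, if x ∈ B then 1 else 0) = 3 := by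
    intro B hB
    rw [← Finset.card_filter]
    have huB : univ.filter (fun x => x ∈ B) = B := by ext; simp
    rw [huB]
    exact (mem_filter.mp hB).2
  rw [Finset.sum_congr rfl h2, Finset.sum_const, hα]
  rfl

lemma erase_pairwise {D : Finset (Finset (Fin 19))} (hD : IsK34Decomposition D) (x : Fin 19) :
    ∀ B1 ∈ D.filter (fun B => B.card = 3 ∧ x ∈ B),
    ∀ B2 ∈ D.filter (fun B => B.card = 3 ∧ x ∈ B),
      B1 ≠ B2 → Disjoint (B1.erase x) (B2.erase x) := by
  intro B1 h1 B2 h2 hne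
  simp only [mem_filter] at h1 h2
  rw [Finset.disjoint_left]
  intro y hy1 hy2
  simp only [mem_erase] at hy1 hy2
  exact hne (block_unique hD h1.1 h2.1 (Ne.symm hy1.1) h1.2.2 hy1.2 h2.2.2 hy2.2)

lemma card_nbhd {D : Finset (Finset (Fin 19))} (hD : IsK34Decomposition D) (x : Fin 19) :
    ((D.filter fun B => B.card = 3 ∧ x ∈ B).biUnion (fun B => B.erase x)).card
      = 2 * (D.filter fun B => B.card = 3 ∧ x ∈ B).card := by
  rw [Finset.card_biUnion (erase_pairwise hD x),
    Finset.sum_const_nat (m := 2) (fun B hB => by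
      simp only [mem_filter] at hB
      rw [card_erase_of_mem hB.2.2, hB.2.1]), mul_comm]

lemma alpha_le {D : Finset (Finset (Fin 19))} (hD : IsK34Decomposition D)
    (hα : (D.filter fun B => B.card = 3).card = 11) (x : Fin 19) :
    (D.filter fun B => B.card = 3 ∧ x ∈ B).card ≤ 3 := by
  by_contra h
  push_neg at h
  have hx6 : 6 ≤ (D.filter fun B => B.card = 3 ∧ x ∈ B).card := by
    rcases alpha_cases hD x with h0|h3|h6|h9 <;> omega
  set N := (D.filter fun B => B.card = 3 ∧ x ∈ B).biUnion (fun B => B.erase x) with hN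
  have hxN : x ∉ N := by
    simp [hN, Finset.mem_biUnion]
  have hNcard : N.card = 2 * (D.filter fun B => B.card = 3 ∧ x ∈ B).card :=
    card_nbhd hD x
  have hNa : ∀ y ∈ N, 3 ≤ (D.filter fun B => B.card = 3 ∧ y ∈ B).card := by
    intro y hy
    simp only [hN, Finset.mem_biUnion, mem_filter, mem_erase] at hy
    obtain ⟨B, ⟨hBD, hB3, hxB⟩, hyx, hyB⟩ := hy
    have h1 : 0 < (D.filter fun B => B.card = 3 ∧ y ∈ B).card :=
      Finset.card_pos.mpr ⟨B, mem_filter.mpr ⟨hBD, hB3, hyB⟩⟩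
    rcases alpha_cases hD y with h0|h3|h6|h9 <;> omega
  have hsum : ∑ z ∈ insert x N, (D.filter fun B => B.card = 3 ∧ z ∈ B).card ≤ 33 := by
    rw [← sum_alpha hα]
    exact Finset.sum_le_sum_of_subset (Finset.subset_univ _)
  rw [Finset.sum_insert hxN] at hsum
  have h2 : 3 * N.card ≤ ∑ y ∈ N, (D.filter fun B => B.card = 3 ∧ y ∈ B).card := by
    calc 3 * N.card = ∑ _y ∈ N, 3 := by rw [Finset.sum_const, smul_eq_mul, mul_comm]
    _ ≤ _ := Finset.sum_le_sum hNa
  omega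

theorem k19_eleven_triangles_union_six_regular (D : Finset (Finset (Fin 19)))
    (hD : IsK34Decomposition D)
    (hα : (D.filter fun B => B.card = 3).card = 11) :
    (Finset.univ.filter fun x : Fin 19 =>
      (D.filter fun B => B.card = 3 ∧ x ∈ B).card = 3).card = 11 ∧
    (Finset.univ.filter fun x : Fin 19 =>
      (D.filter fun B => B.card = 3 ∧ x ∈ B).card = 0).card = 8 ∧
    ∀ x : Fin 19, (D.filter fun B => B.card = 3 ∧ x ∈ B).card = 3 →
      (Finset.univ.filter fun y : Fin 19 =>
        y ≠ x ∧ ∃ B ∈ D, B.card = 3 ∧ x ∈ B ∧ y ∈ B).card = 6 := by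

  classical
  have hcase : ∀ x : Fin 19, (D.filter fun B => B.card = 3 ∧ x ∈ B).card = 0 ∨
      (D.filter fun B => B.card = 3 ∧ x ∈ B).card = 3 := by
    intro x
    have := alpha_le hD hα x
    rcases alpha_cases hD x with h|h|h|h <;> omega
  have hA : (univ.filter fun x : Fin 19 =>
      (D.filter fun B => B.card = 3 ∧ x ∈ B).card = 3).card = 11 := by
    have hsplit := Finset.sum_filter_add_sum_filter_not (univ : Finset (Fin 19))
      (fun x => (D.filter fun B => B.card = 3 ∧ x ∈ B).card = 3)
      (fun x => (D.filter fun B => B.card = 3 ∧ x ∈ B).card)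
    rw [sum_alpha hα] at hsplit
    have hz : ∑ x ∈ univ.filter
        (fun x => ¬ (D.filter fun B => B.card = 3 ∧ x ∈ B).card = 3),
        (D.filter fun B => B.card = 3 ∧ x ∈ B).card = 0 := by
      apply Finset.sum_eq_zero
      intro x hx
      simp only [mem_filter] at hx
      rcases hcase x with h|h
      · exact h
      · exact absurd h hx.2
    have h3 : ∑ x ∈ univ.filter
        (fun x => (D.filter fun B => B.card = 3 ∧ x ∈ B).card = 3),
        (D.filter fun B => B.card = 3 ∧ x ∈ B).card
        = (univ.filter fun x =>
            (D.filter fun B => B.card = 3 ∧ x ∈ B).card = 3).card * 3 :=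
      Finset.sum_const_nat (m := 3) (fun x hx => (mem_filter.mp hx).2)
    omega
  refine ⟨hA, ?_, ?_⟩
  · have hZ : (univ.filter fun x : Fin 19 =>
        (D.filter fun B => B.card = 3 ∧ x ∈ B).card = 0)
        = univ.filter (fun x => ¬ (D.filter fun B => B.card = 3 ∧ x ∈ B).card = 3) := by
      apply filter_congr
      intro x _
      rcases hcase x with h|h <;> simp [h]
    rw [hZ]
    have hc := Finset.card_filter_add_card_filter_not (s := (univ : Finset (Fin 19)))
      (p := fun x => (D.filter fun B => B.card = 3 ∧ x ∈ B).card = 3)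
    simp only [Finset.card_univ, Fintype.card_fin] at hc
    omega
  · intro x hx3
    have hNeq : (univ.filter fun y : Fin 19 =>
        y ≠ x ∧ ∃ B ∈ D, B.card = 3 ∧ x ∈ B ∧ y ∈ B)
        = (D.filter fun B => B.card = 3 ∧ x ∈ B).biUnion (fun B => B.erase x) := by
      ext y
      simp only [mem_filter, mem_univ, true_and, Finset.mem_biUnion, mem_erase]
      constructor
      · rintro ⟨hyx, B, hBD, h3, hxB, hyB⟩
        exact ⟨B, ⟨hBD, h3, hxB⟩, hyx, hyB⟩
      · rintro ⟨B, ⟨hBD, h3, hxB⟩, hyx, hyB⟩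
        exact ⟨hyx, B, hBD, h3, hxB, hyB⟩
    rw [hNeq, card_nbhd hD x, hx3]
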